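/- Any matrix produced by running the commuting generation algorithm to termination in the balanced case is a solution of the transportation polytope determined by the marginals: if Σ_j I_j^{(0)} = Σ_i O_i^{(0)}, the final matrix S ∈ M_{n×m}(ℕ) satisfies S_{ij} ≥ 0, Σ_{j=1}^{m} S_{ij} = O_i^{(0)} for all i, and Σ_{i=1}^{n} S_{ij} = I_j^{(0)} for all j; in particular NC(S) = Σ_i O_i^{(0)} is the same for every possible run, so any two matrices S produced by different runs satisfy NC(S) = NC(S'). -/
import Mathlib

structure GenState (n m : ℕ) where
  S : Matrix (Fin n) (Fin m) ℕ
  O : Fin n → ℕ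
  I : Fin m → ℕ

def Step {n m : ℕ} (s t : GenState n m) : Prop :=
  ∃ i j, s.O i ≠ 0 ∧ s.I j ≠ 0 ∧
    (t.S = fun i' j' => if i' = i ∧ j' = j then s.S i' j' + 1 else s.S i' j') ∧
    t.O = Function.update s.O i (s.O i - 1) ∧
    t.I = Function.update s.I j (s.I j - 1)

def NC {n m : ℕ} (S : Matrix (Fin n) (Fin m) ℕ) : ℕ := ∑ i, ∑ j, S i j

lemma step_row {n m : ℕ} {s t : GenState n m} (h : Step s t) (i' : Fin n) :
    (∑ j', t.S i' j') + t.O i' = (∑ j', s.S i' j') + s.O i' := by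
  obtain ⟨i, j, hO, hI, hS, hOeq, hIeq⟩ := h
  simp only [hS, hOeq]
  by_cases hii : i' = i
  · subst hii
    simp only [Function.update_self, true_and]
    have h : ∀ x, (if x = j then s.S i' x + 1 else s.S i' x)
        = s.S i' x + if x = j then 1 else 0 := by
      intro x; by_cases hx : x = j <;> simp [hx]
    simp only [h, Finset.sum_add_distrib, Finset.sum_ite_eq' Finset.univ j,
      Finset.mem_univ, if_true]
    omega
  · simp only [Function.update_of_ne hii]
    congr 1
    apply Finset.sum_congr rfl
    intro j' _
    simp [hii]

lemma step_col {n m : ℕ} {s t : GenState n m} (h : Step s t) (j' : Fin m) :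
    (∑ i', t.S i' j') + t.I j' = (∑ i', s.S i' j') + s.I j' := by
  obtain ⟨i, j, hO, hI, hS, hOeq, hIeq⟩ := h
  simp only [hS, hIeq]
  by_cases hjj : j' = j
  · subst hjj
    simp only [Function.update_self, and_true]
    have h : ∀ x, (if x = i then s.S x j' + 1 else s.S x j')
        = s.S x j' + if x = i then 1 else 0 := by
      intro x; by_cases hx : x = i <;> simp [hx]
    simp only [h, Finset.sum_add_distrib, Finset.sum_ite_eq' Finset.univ i,
      Finset.mem_univ, if_true]
    omega
  · simp only [Function.update_of_ne hjj]
    congr 1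
    apply Finset.sum_congr rfl
    intro i' _
    simp [hjj]

lemma chain_row {n m : ℕ} (st : ℕ → GenState n m) (N : ℕ)
    (hsteps : ∀ k < N, Step (st k) (st (k + 1))) (i : Fin n) :
    (∑ j, (st N).S i j) + (st N).O i = (∑ j, (st 0).S i j) + (st 0).O i := by
  induction N with
  | zero => rfl
  | succ N ih =>
    rw [step_row (hsteps N (Nat.lt_succ_self N)) i]
    exact ih (fun k hk => hsteps k (hk.trans (Nat.lt_succ_self N)))

lemma chain_col {n m : ℕ} (st : ℕ → GenState n m) (N : ℕ)
    (hsteps : ∀ k < N, Step (st k) (st (k + 1))) (j : Fin m) :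
    (∑ i, (st N).S i j) + (st N).I j = (∑ i, (st 0).S i j) + (st 0).I j := by
  induction N with
  | zero => rfl
  | succ N ih =>
    rw [step_col (hsteps N (Nat.lt_succ_self N)) j]
    exact ih (fun k hk => hsteps k (hk.trans (Nat.lt_succ_self N)))

lemma main_parts {n m : ℕ}
    (st : ℕ → GenState n m) (N : ℕ)
    (h0 : (st 0).S = 0)
    (hbal : ∑ j, (st 0).I j = ∑ i, (st 0).O i)
    (hsteps : ∀ k < N, Step (st k) (st (k + 1)))
    (hterm : ∀ i, (st N).O i = 0) :
    (∀ i, ∑ j, (st N).S i j = (st 0).O i) ∧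
    (∀ j, ∑ i, (st N).S i j = (st 0).I j) ∧
    NC (st N).S = ∑ i, (st 0).O i := by
  have hrow : ∀ i, ∑ j, (st N).S i j = (st 0).O i := by
    intro i
    have := chain_row st N hsteps i
    simp [h0, hterm i] at this
    exact this
  have hNC : NC (st N).S = ∑ i, (st 0).O i := by
    unfold NC
    simp [hrow]
  have hcolI : ∀ j, (∑ i, (st N).S i j) + (st N).I j = (st 0).I j := by
    intro j
    have := chain_col st N hsteps j
    simpa [h0] using this
  have hIzero : ∀ j, (st N).I j = 0 := by
    have hsum : (∑ j, ∑ i, (st N).S i j) + ∑ j, (st N).I j = ∑ j, (st 0).I j := by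
      rw [← Finset.sum_add_distrib]
      exact Finset.sum_congr rfl (fun j _ => hcolI j)
    rw [Finset.sum_comm] at hsum
    have : NC (st N).S + ∑ j, (st N).I j = ∑ i, (st 0).O i := by
      rw [← hbal]; exact hsum
    rw [hNC] at this
    have hz : ∑ j, (st N).I j = 0 := by omega
    intro j
    exact (Finset.sum_eq_zero_iff.mp hz) j (Finset.mem_univ j)
  refine ⟨hrow, fun j => ?_, hNC⟩
  have := hcolI j
  rw [hIzero j] at this
  simpa using this

/-- Any matrix produced by running the algorithm to termination in the balanced case
`∑ j, I⁰ j = ∑ i, O⁰ i` lies in the transportation polytope determined by the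
marginals: its entries are nonnegative, its row sums are the prescribed out-commuter
numbers and its column sums are the prescribed in-commuter numbers; in particular
`NC S = ∑ i, O⁰ i`, so any two matrices produced by different runs with the same
initial data have the same total number of commuters. -/
theorem final_matrix_in_transportation_polytope {n m : ℕ}
    (st : ℕ → GenState n m) (N : ℕ)
    (h0 : (st 0).S = 0)
    (hbal : ∑ j, (st 0).I j = ∑ i, (st 0).O i)
    (hsteps : ∀ k < N, Step (st k) (st (k + 1)))
    (hterm : ∀ i, (st N).O i = 0) :
    (∀ i j, 0 ≤ (st N).S i j) ∧
    (∀ i, ∑ j, (st N).S i j = (st 0).O i) ∧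
    (∀ j, ∑ i, (st N).S i j = (st 0).I j) ∧
    NC (st N).S = ∑ i, (st 0).O i ∧
    (∀ (st' : ℕ → GenState n m) (N' : ℕ),
      (st' 0).S = 0 →
      (st' 0).O = (st 0).O →
      (st' 0).I = (st 0).I →
      (∀ k < N', Step (st' k) (st' (k + 1))) →
      (∀ i, (st' N').O i = 0) →
      NC (st' N').S = NC (st N).S) := by
  obtain ⟨hrow, hcol, hNC⟩ := main_parts st N h0 hbal hsteps hterm
  refine ⟨fun i j => Nat.zero_le _, hrow, hcol, hNC, ?_⟩
  intro st' N' h0' hO' hI' hsteps' hterm'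
  have hbal' : ∑ j, (st' 0).I j = ∑ i, (st' 0).O i := by rw [hO', hI']; exact hbal
  obtain ⟨_, _, hNC'⟩ := main_parts st' N' h0' hbal' hsteps' hterm'
  rw [hNC', hNC, hO']
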